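/- (Gyöngy–Krylov criterion.) Let (E,ρ) be a Polish space equipped with its Borel σ-algebra, and let (Z_n)_{n∈ℕ} be a sequence of E-valued random elements defined on a common probability space (Ω,ℱ,P). Assume that for every pair of strictly increasing sequences of indices (l_k) and (m_k) there exists a further common subsequence (k_r) such that the laws of the pairs (Z_{l_{k_r}}, Z_{m_{k_r}}) converge weakly, as probability measures on E × E, to a probability measure μ satisfying μ({(u,v) ∈ E × E : u = v}) = 1. Then there exists an E-valued random element Z on (Ω,ℱ,P) such that Z_n converges to Z in probability, i.e. P(ρ(Z_n, Z) > δ) → 0 as n → ∞ for every δ > 0. -/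

import Mathlib

open Filter Topology MeasureTheory
open scoped ENNReal

noncomputable def gkTest (E : Type) [MetricSpace E] (δ : ℝ) (hδ : 0 < δ) :
    BoundedContinuousFunction (E × E) ℝ :=
  BoundedContinuousFunction.mkOfBound
    ⟨fun p => min (dist p.1 p.2 / δ) 1, by fun_prop⟩ 1 (by
      intro x y
      simp only [ContinuousMap.coe_mk]
      rw [Real.dist_eq, abs_sub_le_iff]
      have hx0 : (0:ℝ) ≤ min (dist x.1 x.2 / δ) 1 := le_min (by positivity) zero_le_one
      have hy0 : (0:ℝ) ≤ min (dist y.1 y.2 / δ) 1 := le_min (by positivity) zero_le_one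
      have hx1 := min_le_right (dist x.1 x.2 / δ) 1
      have hy1 := min_le_right (dist y.1 y.2 / δ) 1
      constructor <;> linarith)

lemma gkTest_apply (E : Type) [MetricSpace E] {δ : ℝ} (hδ : 0 < δ) (p : E × E) :
    gkTest E δ hδ p = min (dist p.1 p.2 / δ) 1 := rfl

lemma gkTest_nonneg (E : Type) [MetricSpace E] {δ : ℝ} (hδ : 0 < δ) (p : E × E) :
    0 ≤ gkTest E δ hδ p := le_min (by positivity) zero_le_one

lemma gkTest_eq_one (E : Type) [MetricSpace E] {δ : ℝ} (hδ : 0 < δ) {p : E × E}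
    (hp : δ ≤ dist p.1 p.2) : gkTest E δ hδ p = 1 := by
  rw [gkTest_apply]; exact min_eq_right ((one_le_div hδ).2 hp)

lemma gkTest_eq_zero (E : Type) [MetricSpace E] {δ : ℝ} (hδ : 0 < δ) {p : E × E}
    (hp : p.1 = p.2) : gkTest E δ hδ p = 0 := by
  rw [gkTest_apply, hp, dist_self, zero_div]; simp

lemma gk_cauchy
    (E : Type) [MetricSpace E] [TopologicalSpace.SeparableSpace E]
    [MeasurableSpace E] [BorelSpace E]
    (Ω : Type) [MeasurableSpace Ω] (P : Measure Ω) [IsProbabilityMeasure P]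
    (Z : ℕ → Ω → E) (hZmeas : ∀ n, Measurable (Z n))
    (h : ∀ l m : ℕ → ℕ, StrictMono l → StrictMono m →
      ∃ k : ℕ → ℕ, StrictMono k ∧
        ∃ μ : Measure (E × E), IsProbabilityMeasure μ ∧
          μ {p : E × E | p.1 = p.2} = 1 ∧
          ∀ f : BoundedContinuousFunction (E × E) ℝ,
            Tendsto (fun r => ∫ ω, f (Z (l (k r)) ω, Z (m (k r)) ω) ∂P)
              atTop (𝓝 (∫ p, f p ∂μ))) :
    ∀ ε : ℝ, 0 < ε → ∀ δ : ℝ, 0 < δ → ∃ N : ℕ, ∀ p, N ≤ p → ∀ q, N ≤ q →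
      P {ω | δ ≤ dist (Z p ω) (Z q ω)} < ENNReal.ofReal ε := by
  haveI := UniformSpace.secondCountable_of_separable E
  by_contra hcon
  push_neg at hcon
  obtain ⟨ε, hε, δ, hδ, hseq⟩ := hcon
  choose p hp q hq hPQ using hseq
  set a : ℕ → ℕ := fun j => Nat.rec 0 (fun _ prev => max (p prev) (q prev) + 1) j with ha
  have ha_succ : ∀ j, a (j + 1) = max (p (a j)) (q (a j)) + 1 := fun j => rfl
  have hlmono : StrictMono (fun j => p (a j)) := by
    apply strictMono_nat_of_lt_succ
    intro j
    calc p (a j) < max (p (a j)) (q (a j)) + 1 := Nat.lt_succ_of_le (le_max_left _ _)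
    _ = a (j + 1) := (ha_succ j).symm
    _ ≤ p (a (j + 1)) := hp _
  have hmmono : StrictMono (fun j => q (a j)) := by
    apply strictMono_nat_of_lt_succ
    intro j
    calc q (a j) < max (p (a j)) (q (a j)) + 1 := Nat.lt_succ_of_le (le_max_right _ _)
    _ = a (j + 1) := (ha_succ j).symm
    _ ≤ q (a (j + 1)) := hq _
  obtain ⟨k, hk, μ, hμprob, hμdiag, hμconv⟩ := h _ _ hlmono hmmono
  have hconv := hμconv (gkTest E δ hδ)
  -- the limit integral is zero
  have hS : MeasurableSet {x : E × E | x.1 = x.2} :=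
    (isClosed_eq continuous_fst continuous_snd).measurableSet
  have hae : ∀ᵐ x ∂μ, x.1 = x.2 := by
    rw [ae_iff]
    have : {x : E × E | ¬ x.1 = x.2} = {x : E × E | x.1 = x.2}ᶜ := rfl
    rw [this, measure_compl hS (measure_ne_top μ _), hμdiag, measure_univ]
    simp
  have hlim0 : ∫ x, gkTest E δ hδ x ∂μ = 0 := by
    apply integral_eq_zero_of_ae
    filter_upwards [hae] with x hx
    exact gkTest_eq_zero E hδ hx
  rw [hlim0] at hconv
  -- each term is at least ε
  have hterm : ∀ r, ε ≤ ∫ ω, gkTest E δ hδ (Z (p (a (k r))) ω, Z (q (a (k r))) ω) ∂P := by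
    intro r
    set n1 := p (a (k r)); set n2 := q (a (k r))
    have hpair : Measurable (fun ω => (Z n1 ω, Z n2 ω)) := (hZmeas n1).prodMk (hZmeas n2)
    have hgmeas : Measurable (fun ω => gkTest E δ hδ (Z n1 ω, Z n2 ω)) :=
      ((gkTest E δ hδ).continuous.measurable).comp hpair
    have hgint : Integrable (fun ω => gkTest E δ hδ (Z n1 ω, Z n2 ω)) P := by
      refine ⟨hgmeas.aestronglyMeasurable, ?_⟩
      apply MeasureTheory.HasFiniteIntegral.of_bounded (C := ‖gkTest E δ hδ‖)
      exact Filter.Eventually.of_forall fun ω => (gkTest E δ hδ).norm_coe_le_norm _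
    have hsmeas : MeasurableSet {ω | δ ≤ dist (Z n1 ω) (Z n2 ω)} :=
      measurableSet_le measurable_const ((hZmeas n1).dist (hZmeas n2))
    have hind : ∀ ω, Set.indicator {ω | δ ≤ dist (Z n1 ω) (Z n2 ω)} (fun _ => (1:ℝ)) ω
        ≤ gkTest E δ hδ (Z n1 ω, Z n2 ω) := by
      intro ω
      by_cases hω : ω ∈ {ω | δ ≤ dist (Z n1 ω) (Z n2 ω)}
      · rw [Set.indicator_of_mem hω, gkTest_eq_one E hδ (p := (Z n1 ω, Z n2 ω)) hω]
      · rw [Set.indicator_of_notMem hω]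
        exact gkTest_nonneg E hδ _
    calc ε ≤ (P {ω | δ ≤ dist (Z n1 ω) (Z n2 ω)}).toReal := by
          rw [← ENNReal.ofReal_le_iff_le_toReal (measure_ne_top P _)]
          exact hPQ (a (k r))
      _ = ∫ ω, Set.indicator {ω | δ ≤ dist (Z n1 ω) (Z n2 ω)} (fun _ => (1:ℝ)) ω ∂P := by
          rw [MeasureTheory.integral_indicator_const (1:ℝ) hsmeas]; simp; rfl
      _ ≤ _ := integral_mono ((integrable_const (1:ℝ)).indicator hsmeas) hgint hind
  have : ε ≤ 0 := ge_of_tendsto' hconv hterm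
  linarith

theorem gyongy_krylov_criterion
    (E : Type) [MetricSpace E] [TopologicalSpace.SeparableSpace E] [CompleteSpace E]
    [MeasurableSpace E] [BorelSpace E]
    (Ω : Type) [MeasurableSpace Ω] (P : Measure Ω) [IsProbabilityMeasure P]
    (Z : ℕ → Ω → E) (hZmeas : ∀ n, Measurable (Z n))
    (h : ∀ l m : ℕ → ℕ, StrictMono l → StrictMono m →
      ∃ k : ℕ → ℕ, StrictMono k ∧
        ∃ μ : Measure (E × E), IsProbabilityMeasure μ ∧
          μ {p : E × E | p.1 = p.2} = 1 ∧
          -- the laws of (Z_{l_{k_r}}, Z_{m_{k_r}}) converge weakly to μ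
          ∀ f : BoundedContinuousFunction (E × E) ℝ,
            Tendsto (fun r => ∫ ω, f (Z (l (k r)) ω, Z (m (k r)) ω) ∂P)
              atTop (𝓝 (∫ p, f p ∂μ))) :
    ∃ Zlim : Ω → E, Measurable Zlim ∧ TendstoInMeasure P Z atTop Zlim := by
  haveI := UniformSpace.secondCountable_of_separable E
  have hC := gk_cauchy E Ω P Z hZmeas h
  -- choose a rapidly Cauchy subsequence
  have hpow : ∀ j : ℕ, (0:ℝ) < (1/2)^j := fun j => by positivity
  choose N hN using fun j => hC ((1/2)^j) (hpow j) ((1/2)^j) (hpow j)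
  set n : ℕ → ℕ := fun j => (Finset.range (j+1)).sup N + j with hn
  have hnN : ∀ j, N j ≤ n j := fun j =>
    le_add_of_le_of_nonneg (Finset.le_sup (Finset.self_mem_range_succ j)) (Nat.zero_le _)
  have hnmono : StrictMono n := by
    apply strictMono_nat_of_lt_succ
    intro j
    have h1 : (Finset.range (j+1)).sup N ≤ (Finset.range (j+1+1)).sup N :=
      Finset.sup_mono (Finset.range_subset_range.2 (by omega))
    show (Finset.range (j+1)).sup N + j < (Finset.range (j+1+1)).sup N + (j+1)
    omega
  set s : ℕ → Set Ω := fun j => {ω | (1/2)^j ≤ dist (Z (n j) ω) (Z (n (j+1)) ω)} with hs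
  have hsP : ∀ j, P (s j) ≤ ENNReal.ofReal ((1/2)^j) := fun j =>
    (hN j (n j) (hnN j) (n (j+1)) (le_trans (hnN j) (hnmono (Nat.lt_succ_self j)).le)).le
  have hsum : (∑' j, P (s j)) ≠ ⊤ := by
    refine ne_top_of_le_ne_top ?_ (ENNReal.tsum_le_tsum hsP)
    have : ∀ j : ℕ, ENNReal.ofReal ((1/2:ℝ)^j) = (2⁻¹ : ℝ≥0∞)^j := by
      intro j
      rw [ENNReal.ofReal_pow (by norm_num)]
      congr 1
      rw [one_div, ENNReal.ofReal_inv_of_pos (by norm_num), ENNReal.ofReal_ofNat]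
    simp_rw [this]
    rw [ENNReal.tsum_geometric]
    rw [ENNReal.one_sub_inv_two]
    simp
  have hae := ae_eventually_notMem hsum
  -- a.e. the subsequence converges
  have haelim : ∀ᵐ ω ∂P, ∃ c, Tendsto (fun j => Z (n j) ω) atTop (𝓝 c) := by
    filter_upwards [hae] with ω hω
    obtain ⟨J, hJ⟩ := eventually_atTop.1 hω
    have hcauchy : CauchySeq (fun i => Z (n (i + J)) ω) := by
      apply cauchySeq_of_le_geometric (1/2) ((1/2)^J * 2) (by norm_num)
      intro i
      have hidx : i + 1 + J = i + J + 1 := by omega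
      rw [hidx]
      have h1 : ω ∉ s (i + J) := hJ (i + J) (by omega)
      have h2 : dist (Z (n (i+J)) ω) (Z (n (i+J+1)) ω) < (1/2)^(i+J) := by
        simpa [hs] using h1
      calc dist (Z (n (i+J)) ω) (Z (n (i+J+1)) ω) ≤ (1/2)^(i+J) := h2.le
        _ = (1/2)^J * (1/2)^i := by rw [pow_add]; ring
        _ ≤ (1/2)^J * 2 * (1/2)^i := by nlinarith [hpow J, hpow i]
    obtain ⟨c, hc⟩ := cauchySeq_tendsto_of_complete hcauchy
    exact ⟨c, (Filter.tendsto_add_atTop_iff_nat J).1 hc⟩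
  obtain ⟨Zlim, hZlimmeas, hZlimae⟩ :=
    measurable_limit_of_tendsto_metrizable_ae (L := atTop)
      (fun j => (hZmeas (n j)).aemeasurable) haelim
  refine ⟨Zlim, hZlimmeas, ?_⟩
  -- subsequence tends in measure
  have hsub : TendstoInMeasure P (fun j => Z (n j)) atTop Zlim :=
    tendstoInMeasure_of_tendsto_ae (fun j => (hZmeas (n j)).aestronglyMeasurable) hZlimae
  rw [tendstoInMeasure_iff_dist] at hsub ⊢
  intro ε hε
  rw [ENNReal.tendsto_atTop_zero]
  intro η hη
  set η' : ℝ≥0∞ := min η 1 with hη'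
  have hη'top : η' ≠ ⊤ := ne_top_of_le_ne_top ENNReal.one_ne_top (min_le_right _ _)
  have hη'pos0 : 0 < η' := lt_min hη zero_lt_one
  have hη'pos : 0 < η'.toReal := ENNReal.toReal_pos hη'pos0.ne' hη'top
  set t : ℝ := η'.toReal with ht
  obtain ⟨N₁, hN₁⟩ := hC (t/2) (by linarith) (ε/2) (by linarith)
  have hsub2 := (ENNReal.tendsto_atTop_zero.1 (hsub (ε/2) (by linarith)))
    (ENNReal.ofReal (t/2)) (by simp [ENNReal.ofReal_pos]; linarith)
  obtain ⟨J₀, hJ₀⟩ := hsub2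
  set j := max J₀ N₁ with hj
  have hnj : N₁ ≤ n j := le_trans (le_max_right _ _) (hnmono.le_apply)
  refine ⟨N₁, fun p hp => ?_⟩
  have hsubset : {x | ε ≤ dist (Z p x) (Zlim x)} ⊆
      {x | ε/2 ≤ dist (Z p x) (Z (n j) x)} ∪ {x | ε/2 ≤ dist (Z (n j) x) (Zlim x)} := by
    intro x hx
    by_contra hcon
    simp only [Set.mem_union, Set.mem_setOf_eq, not_or, not_le] at hcon
    have := dist_triangle (Z p x) (Z (n j) x) (Zlim x)
    simp only [Set.mem_setOf_eq] at hx
    linarith [hcon.1, hcon.2]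
  calc P {x | ε ≤ dist (Z p x) (Zlim x)}
      ≤ P ({x | ε/2 ≤ dist (Z p x) (Z (n j) x)} ∪ {x | ε/2 ≤ dist (Z (n j) x) (Zlim x)}) :=
        measure_mono hsubset
    _ ≤ P {x | ε/2 ≤ dist (Z p x) (Z (n j) x)} + P {x | ε/2 ≤ dist (Z (n j) x) (Zlim x)} :=
        measure_union_le _ _
    _ ≤ ENNReal.ofReal (t/2) + ENNReal.ofReal (t/2) :=
        add_le_add (hN₁ p hp (n j) hnj).le (hJ₀ j (le_max_left _ _))
    _ = ENNReal.ofReal t := by rw [← ENNReal.ofReal_add (by linarith) (by linarith)]; ring_nf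
    _ = η' := ENNReal.ofReal_toReal hη'top
    _ ≤ η := min_le_left _ _
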